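/- With x_m := (e_{0m}, (0 m)) in Graphs(n+1) ⋊ S_{n+1}, for distinct i, j, k in {1,...,n}, one has (x_i x_j x_i x_k)⁴ = identity; i.e., (x_i x_j x_i x_k)² has order exactly 2. -/

import Mathlib

open Equiv Finset

abbrev Vtx (n : ℕ) := Fin (n+1)
abbrev Edge (n : ℕ) := {e : Sym2 (Vtx n) // ¬ e.IsDiag}
abbrev Graphs (n : ℕ) := Edge n → ZMod 2

/-- relabelling of edges by a permutation of vertices -/
def permEdge {n : ℕ} (σ : Perm (Vtx n)) : Edge n ≃ Edge n where
  toFun e := ⟨Sym2.map σ e.1, by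
    simpa [Sym2.isDiag_map σ.injective] using e.2⟩
  invFun e := ⟨Sym2.map σ.symm e.1, by
    simpa [Sym2.isDiag_map σ.symm.injective] using e.2⟩
  left_inv e := by
    ext1
    simp [Sym2.map_map]
  right_inv e := by
    ext1
    simp [Sym2.map_map]

/-- action of a vertex permutation on graphs -/
def gact {n : ℕ} (σ : Perm (Vtx n)) : Graphs n ≃+ Graphs n where
  toFun g := fun e => g ((permEdge σ).symm e)
  invFun g := fun e => g (permEdge σ e)
  left_inv g := by funext e; simp
  right_inv g := by funext e; simp
  map_add' g h := rfl

lemma gact_mul {n : ℕ} (σ τ : Perm (Vtx n)) (g : Graphs n) :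
    gact (σ * τ) g = gact σ (gact τ g) := by
  funext e
  simp only [gact, AddEquiv.coe_mk, Equiv.coe_fn_mk, Equiv.symm]
  congr 1
  ext1
  simp [permEdge, Sym2.map_map]
  rfl

/-- the action as a homomorphism to automorphisms, multiplicatively -/
def φn (n : ℕ) : Perm (Vtx n) →* MulAut (Multiplicative (Graphs n)) where
  toFun σ := AddEquiv.toMultiplicative (gact σ)
  map_one' := by
    ext g
    simp [gact, permEdge]
    refine congrArg (Multiplicative.toAdd g) (Subtype.ext ?_)
    first
      | exact congrFun Sym2.map_id' _
      | exact Sym2.map_id _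
      | simp [Equiv.Perm.one_symm, Equiv.Perm.coe_one]
  map_mul' σ τ := by
    ext g e
    exact congrFun (gact_mul σ τ g.toAdd) e

/-- the ambient group `Graphs(n+1) ⋊ S_{n+1}` -/
abbrev DG (n : ℕ) := SemidirectProduct (Multiplicative (Graphs n)) (Perm (Vtx n)) (φn n)

/-- the single-edge graph with edge `{u,v}` -/
def single {n : ℕ} (u v : Vtx n) : Graphs n :=
  fun e => if e.1 = s(u, v) then 1 else 0

/-- the generator `x_m = (e_{0m}, (0 m))` -/
def xgen {n : ℕ} (m : Vtx n) : DG n :=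
  ⟨Multiplicative.ofAdd (single 0 m), Equiv.swap 0 m⟩

/-- the degree of a vertex in a graph -/
def deg {n : ℕ} (g : Graphs n) (v : Vtx n) : ℕ :=
  (Finset.univ.filter (fun e : Edge n => v ∈ e.1 ∧ g e = 1)).card

/-- the number of edges of a graph -/
def nedges {n : ℕ} (g : Graphs n) : ℕ :=
  (Finset.univ.filter (fun e : Edge n => g e = 1)).card

/-- all degrees even and an even number of edges -/
def evenGraph {n : ℕ} (g : Graphs n) : Prop :=
  (∀ v : Vtx n, Even (deg g v)) ∧ Even (nedges g)

/-- the subgroup generated by the `x_m`, `m = 1, …, n` -/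
def Dn (n : ℕ) : Subgroup (DG n) :=
  Subgroup.closure {x | ∃ m : Vtx n, m ≠ 0 ∧ x = xgen m}

/-- the complete graph -/
def complete (n : ℕ) : Graphs n := fun _ => 1
lemma gact_single {n : ℕ} (σ : Perm (Vtx n)) (u v : Vtx n) :
    gact σ (single u v) = single (σ u) (σ v) := by
  funext e
  show (if (Sym2.map σ.symm e.1) = s(u, v) then (1:ZMod 2) else 0)
      = (if e.1 = s(σ u, σ v) then 1 else 0)
  congr 1
  apply propext
  constructor
  · intro h
    have := congrArg (Sym2.map σ) h
    rw [Sym2.map_map] at this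
    simpa using this
  · intro h
    rw [h, Sym2.map_pair_eq]
    simp [Sym2.map_map]

lemma single_comm {n : ℕ} (u v : Vtx n) : single u v = single v u := by
  funext e
  simp only [single]
  rw [Sym2.eq_swap]

lemma phi_apply {n : ℕ} (σ : Perm (Vtx n)) (a : Graphs n) :
    φn n σ (Multiplicative.ofAdd a) = Multiplicative.ofAdd (gact σ a) := rfl

/-- For distinct `i, j, k ∈ {1,…,n}`, in `Graphs(n+1) ⋊ S_{n+1}` one has
`(x_i x_j x_i x_k)⁴ = 1`, and `(x_i x_j x_i x_k)²` has order exactly 2. -/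
theorem stmt6 (n : ℕ) (i j k : Vtx n)
    (hi : i ≠ 0) (hj : j ≠ 0) (hk : k ≠ 0)
    (hij : i ≠ j) (hik : i ≠ k) (hjk : j ≠ k) :
    (xgen i * xgen j * xgen i * xgen k) ^ 4 = 1 ∧
    orderOf ((xgen i * xgen j * xgen i * xgen k) ^ 2) = 2 := by
  have hi' := hi.symm; have hj' := hj.symm; have hk' := hk.symm
  have hij' := hij.symm; have hik' := hik.symm; have hjk' := hjk.symm
  set w := xgen i * xgen j * xgen i * xgen k with hw
  set h : Graphs n := single 0 i + single j 0 + single k j + single i k with hh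
  have key : w ^ 2 = ⟨Multiplicative.ofAdd h, 1⟩ := by
    rw [pow_two]
    refine SemidirectProduct.ext ?_ ?_
    · simp only [hw, SemidirectProduct.mul_left, SemidirectProduct.mul_right, xgen,
        phi_apply, map_add, gact_single, ← ofAdd_add, Perm.mul_apply,
        Equiv.swap_apply_left, Equiv.swap_apply_right,
        Equiv.swap_apply_def, hi, hj, hk, hij, hik, hjk, hi', hj', hk', hij', hik', hjk',
        if_false, if_true]
      rw [show single j i = single i j from single_comm j i,
          show single k 0 = single 0 k from single_comm k 0, hh]
      congr 1
      funext e
      simp only [Pi.add_apply]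
      generalize single 0 i e = a1
      generalize single i j e = a2
      generalize single j 0 e = a3
      generalize single 0 k e = a4
      generalize single k j e = a5
      generalize single i k e = a6
      revert a1 a2 a3 a4 a5 a6
      have H : ∀ a1 a2 a3 a4 a5 a6 : ZMod 2,
          a1 + a2 + a3 + a4 + (a5 + a2 + a6 + a4) = a1 + a3 + a5 + a6 := by decide
      exact H
    · simp only [hw, SemidirectProduct.mul_right, xgen]
      have hd : (Equiv.swap i j).Disjoint (Equiv.swap 0 k) := by
        intro x
        by_cases h1 : x = i
        · right; subst h1; exact Equiv.swap_apply_of_ne_of_ne hi hik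
        by_cases h2 : x = j
        · right; subst h2; exact Equiv.swap_apply_of_ne_of_ne hj hjk
        · left; exact Equiv.swap_apply_of_ne_of_ne h1 h2
      have hs : Equiv.swap 0 i * Equiv.swap 0 j * Equiv.swap 0 i = Equiv.swap i j := by
        have := Equiv.swap_mul_swap_mul_swap (x := j) (y := 0) (z := i) hj hij'
        rwa [Equiv.swap_comm j 0] at this
      rw [hs, ← pow_two, Commute.mul_pow hd.commute, pow_two, pow_two,
        Equiv.swap_mul_self, Equiv.swap_mul_self, one_mul]
  have hne : (⟨Multiplicative.ofAdd h, 1⟩ : DG n) ≠ 1 := by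
    intro hcon
    have hl := congrArg SemidirectProduct.left hcon
    simp only [SemidirectProduct.one_left] at hl
    have h0 : h = 0 := by
      have := congrArg Multiplicative.toAdd hl
      simpa using this
    have hd : ¬ (s(0, i) : Sym2 (Vtx n)).IsDiag := by simp [hi']
    have := congrFun h0 ⟨s(0, i), hd⟩
    simp only [hh, Pi.add_apply, Pi.zero_apply, single, Sym2.eq_iff] at this
    simp [hi, hj, hk, hij, hik, hjk, hi', hj', hk', hij', hik', hjk'] at this
  have hsq : (w ^ 2) ^ 2 = 1 := by
    rw [key]
    rw [pow_two]
    refine SemidirectProduct.ext ?_ ?_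
    · simp only [SemidirectProduct.mul_left, SemidirectProduct.one_left, map_one,
        MulAut.one_apply, ← ofAdd_add]
      have : h + h = 0 := by
        funext e
        have : ∀ a : ZMod 2, a + a = 0 := by decide
        simpa using this (h e)
      simp [this]
    · simp
  refine ⟨by rw [show (4:ℕ) = 2 * 2 from rfl, pow_mul]; exact hsq, ?_⟩
  exact orderOf_eq_prime hsq (key ▸ hne)
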